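/- For every nonzero rational number u such that 4u⁴ ≠ 3, 12u⁴ ≠ 1, and the three numbers 1, (4u⁴+1)/(4u²) and (4u⁴+1)(256u¹⁶+4352u¹²-1952u⁸+272u⁴+1)/(4u²(4u⁴-3)²(12u⁴-1)²) are pairwise distinct, the set {1, (4u⁴+1)/(4u²), (4u⁴+1)(256u¹⁶+4352u¹²-1952u⁸+272u⁴+1)/(4u²(4u⁴-3)²(12u⁴-1)²)} is a strong rational D(-1)-triple. -/

import Mathlib

/-- `a`, `b`, `c` form a strong rational `D(-1)`-triple: three distinct nonzero rationals
such that `a² - 1`, `b² - 1`, `c² - 1`, `ab - 1`, `ac - 1`, `bc - 1` are rational squares. -/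
def IsStrongDminus1Triple (a b c : ℚ) : Prop :=
  a ≠ b ∧ a ≠ c ∧ b ≠ c ∧ a ≠ 0 ∧ b ≠ 0 ∧ c ≠ 0 ∧
    IsSquare (a ^ 2 - 1) ∧ IsSquare (b ^ 2 - 1) ∧ IsSquare (c ^ 2 - 1) ∧
    IsSquare (a * b - 1) ∧ IsSquare (a * c - 1) ∧ IsSquare (b * c - 1)

/-- The family of strong rational `D(-1)`-triples coming from the point `2P`. -/
theorem strong_triple_from_2P (u : ℚ) (hu : u ≠ 0)
    (h3 : 4 * u ^ 4 ≠ 3) (h12 : 12 * u ^ 4 ≠ 1)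
    (b c : ℚ) (hb : b = (4 * u ^ 4 + 1) / (4 * u ^ 2))
    (hc : c = (4 * u ^ 4 + 1) *
      (256 * u ^ 16 + 4352 * u ^ 12 - 1952 * u ^ 8 + 272 * u ^ 4 + 1) /
      (4 * u ^ 2 * (4 * u ^ 4 - 3) ^ 2 * (12 * u ^ 4 - 1) ^ 2))
    (hne1 : (1 : ℚ) ≠ b) (hne2 : (1 : ℚ) ≠ c) (hne3 : b ≠ c) :
    IsStrongDminus1Triple 1 b c := by
  have hu2 : (0:ℚ) < u ^ 2 := by positivity
  have hu4 : (0:ℚ) < u ^ 4 := by positivity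
  have hd3 : (4 * u ^ 4 - 3 : ℚ) ≠ 0 := by intro h; apply h3; linarith
  have hd12 : (12 * u ^ 4 - 1 : ℚ) ≠ 0 := by intro h; apply h12; linarith
  have hP : (0:ℚ) < 256 * u ^ 16 + 4352 * u ^ 12 - 1952 * u ^ 8 + 272 * u ^ 4 + 1 := by
    nlinarith [mul_nonneg hu4.le (sq_nonneg (272 * u ^ 4 - 61)), pow_pos hu4 4, hu4]
  have hbpos : (0:ℚ) < b := by rw [hb]; positivity
  have hcpos : (0:ℚ) < c := by
    rw [hc]
    apply div_pos
    · nlinarith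
    · positivity
  refine ⟨hne1, hne2, hne3, one_ne_zero, ne_of_gt hbpos, ne_of_gt hcpos, ⟨0, by ring⟩,
    ⟨(4 * u ^ 4 - 1) / (4 * u ^ 2), ?_⟩,
    ⟨(-1024 * u ^ 20 + 23808 * u ^ 16 - 10368 * u ^ 12 + 2592 * u ^ 8 - 372 * u ^ 4 + 1) /
      (4 * u ^ 2 * (4 * u ^ 4 - 3) ^ 2 * (12 * u ^ 4 - 1) ^ 2), ?_⟩,
    ⟨(2 * u ^ 2 - 1) / (2 * u), ?_⟩,
    ⟨(-32 * u ^ 10 + 144 * u ^ 8 + 48 * u ^ 6 - 24 * u ^ 4 - 18 * u ^ 2 + 1) /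
      (2 * u * (4 * u ^ 4 - 3) * (12 * u ^ 4 - 1)), ?_⟩,
    ⟨(-64 * u ^ 12 - 272 * u ^ 8 + 68 * u ^ 4 + 1) /
      (4 * u ^ 2 * (4 * u ^ 4 - 3) * (12 * u ^ 4 - 1)), ?_⟩⟩ <;>
  · subst hb hc
    field_simp [hu, hd3, hd12, show u ^ 4 * 12 - 1 ≠ 0 by rwa [mul_comm],
      show u ^ 4 * 4 - 3 ≠ 0 by rwa [mul_comm]]
    ring
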